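/- Riemann–Roch for graphs: for a loopless finite connected graph G of genus g = |E(G)| − |V(G)| + 1, and any divisor d on G, r_G(d) − r_G(K_G − d) = deg(d) − g + 1, where K_G = Σ_v (val(v) − 2)[v]. -/

import Mathlib

open scoped Classical

namespace BN

/-- A finite multigraph: `E u v` is the number of edges (other than loops)
between distinct vertices `u` and `v`, and `loops v` is the number of loops at `v`. -/
structure MultiGraph (V : Type) where
  E : V → V → ℕ
  loops : V → ℕ
  symm : ∀ u v, E u v = E v u
  noDiag : ∀ v, E v v = 0

variable {V V1 V2 : Type}

/-- The divisor `[v]`. -/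
def one [DecidableEq V] (v : V) : V → ℤ := fun w => if w = v then 1 else 0

/-- Degree of a divisor. -/
def deg [Fintype V] (d : V → ℤ) : ℤ := ∑ v, d v

/-- Effective divisor. -/
def Effective (d : V → ℤ) : Prop := ∀ v, 0 ≤ d v

namespace MultiGraph

/-- Divisor of a rational function (loops contribute nothing). -/
def div [Fintype V] (G : MultiGraph V) (f : V → ℤ) : V → ℤ :=
  fun v => ∑ w, (G.E v w : ℤ) * (f w - f v)

def Principal [Fintype V] (G : MultiGraph V) (d : V → ℤ) : Prop :=
  ∃ f : V → ℤ, d = G.div f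

def LinEquiv [Fintype V] (G : MultiGraph V) (d d' : V → ℤ) : Prop :=
  G.Principal (d' - d)

/-- `d` is linearly equivalent to an effective divisor. -/
def Winnable [Fintype V] (G : MultiGraph V) (d : V → ℤ) : Prop :=
  ∃ e : V → ℤ, Effective e ∧ G.LinEquiv d e

/-- The Baker–Norine rank of a divisor. -/
noncomputable def rank [Fintype V] (G : MultiGraph V) (d : V → ℤ) : ℤ :=
  if G.Winnable d then
    (sSup {s : ℕ | ∀ e : V → ℤ, Effective e → deg e = (s : ℤ) → G.Winnable (d - e)} : ℕ)
  else -1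

def Connected (G : MultiGraph V) : Prop :=
  ∀ u v : V, Relation.ReflTransGen (fun a b => 0 < G.E a b) u v

def Loopless (G : MultiGraph V) : Prop := ∀ v, G.loops v = 0

/-- Number of edges from `v` to vertices outside `A`. -/
def outdeg [Fintype V] [DecidableEq V] (G : MultiGraph V) (A : Finset V) (v : V) : ℕ :=
  ∑ w ∈ Finset.univ.filter (fun w => w ∉ A), G.E v w

/-- `v0`-reduced divisor. -/
def Reduced [Fintype V] [DecidableEq V] (G : MultiGraph V) (v0 : V) (d : V → ℤ) : Prop :=
  (∀ v, v ≠ v0 → 0 ≤ d v) ∧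
  ∀ A : Finset V, A.Nonempty → v0 ∉ A → ∃ v ∈ A, d v < (G.outdeg A v : ℤ)

def valence [Fintype V] (G : MultiGraph V) (v : V) : ℕ :=
  (∑ w, G.E v w) + 2 * G.loops v

/-- Canonical divisor. -/
def K [Fintype V] (G : MultiGraph V) : V → ℤ := fun v => (G.valence v : ℤ) - 2

def edgeCount [Fintype V] (G : MultiGraph V) : ℕ :=
  (∑ v, ∑ w, G.E v w) / 2 + ∑ v, G.loops v

end MultiGraph

open MultiGraph

/-- The graph obtained by joining `G1` and `G2` by a single bridge from `v1` to `v2`. -/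
def bridgeJoin [DecidableEq V1] [DecidableEq V2]
    (G1 : MultiGraph V1) (G2 : MultiGraph V2) (v1 : V1) (v2 : V2) :
    MultiGraph (V1 ⊕ V2) where
  E x y :=
    match x, y with
    | .inl a, .inl b => G1.E a b
    | .inr a, .inr b => G2.E a b
    | .inl a, .inr b => if a = v1 ∧ b = v2 then 1 else 0
    | .inr b, .inl a => if a = v1 ∧ b = v2 then 1 else 0
  loops := Sum.elim G1.loops G2.loops
  symm := by rintro (a | a) (b | b) <;> simp [G1.symm, G2.symm]
  noDiag := by rintro (a | a) <;> simp [G1.noDiag, G2.noDiag]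

/-- The virtual loopless graph `Ḡ•` of a vertex-weighted graph `(G, ω)`:
insert a vertex into each loop of `G` and add `ω v` subdivided loops at each `v`.
The inserted vertices are the pairs `⟨v, i⟩` with `i : Fin (G.loops v + ω v)`,
each joined to `v` by two parallel edges. -/
noncomputable def bullet (G : MultiGraph V) (ω : V → ℕ) :
    MultiGraph (V ⊕ (Σ v : V, Fin (G.loops v + ω v))) where
  E x y :=
    match x, y with
    | .inl u, .inl v => G.E u v
    | .inl u, .inr w => if u = w.1 then 2 else 0
    | .inr w, .inl u => if u = w.1 then 2 else 0
    | .inr _, .inr _ => 0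
  loops := fun _ => 0
  symm := by rintro (u | u) (v | v) <;> simp [G.symm]
  noDiag := by rintro (v | v) <;> simp [G.noDiag]

/-- The rank `r_Ḡ(d)` of a divisor on a vertex-weighted graph `(G, ω)`:
the Baker–Norine rank of `d` on `Ḡ•`. -/
noncomputable def wrank [Fintype V] [DecidableEq V] (G : MultiGraph V) (ω : V → ℕ)
    (d : V → ℤ) : ℤ :=
  (bullet G ω).rank (Sum.elim d 0)

/-- `v` is a base-point of the complete linear system `|d|•` on `Ḡ•`. -/
def wBasePoint [Fintype V] [DecidableEq V] (G : MultiGraph V) (ω : V → ℕ)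
    (d : V → ℤ) (v : V) : Prop :=
  wrank G ω (d - one v) = wrank G ω d

/-- Genus of a vertex-weighted graph. -/
def genus [Fintype V] (G : MultiGraph V) (ω : V → ℕ) : ℤ :=
  (G.edgeCount : ℤ) - Fintype.card V + 1 + ∑ v, (ω v : ℤ)

/-- A vertex-weighted graph of genus `≥ 2` is hyperelliptic if `Ḡ•` carries a
divisor of degree `2` and rank `1`. -/
def Hyperelliptic [Fintype V] [DecidableEq V] (G : MultiGraph V) (ω : V → ℕ) : Prop :=
  2 ≤ genus G ω ∧ ∃ d, deg d = 2 ∧ (bullet G ω).rank d = 1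

/-- The canonical divisor `K_Ḡ` of a vertex-weighted graph, viewed as a divisor on `G`. -/
noncomputable def wK [Fintype V] (G : MultiGraph V) (ω : V → ℕ) : V → ℤ :=
  fun v => (bullet G ω).K (Sum.inl v)

section RRproof

set_option linter.unusedSectionVars false

open Finset MultiGraph

variable {V : Type} [Fintype V] [DecidableEq V]

lemma antisym_sum_zero (g : V → V → ℤ) (hg : ∀ v w, g v w = - g w v)
    (A : Finset V) : ∑ v ∈ A, ∑ w ∈ A, g v w = 0 := by
  have key : ∀ S : ℤ, S = -S → S = 0 := by intro S h; omega
  apply key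
  conv_lhs => rw [Finset.sum_comm]
  rw [← Finset.sum_neg_distrib]
  refine Finset.sum_congr rfl fun w _ => ?_
  rw [← Finset.sum_neg_distrib]
  exact Finset.sum_congr rfl fun v _ => hg v w

lemma sum_div_eq (G : MultiGraph V) (f : V → ℤ) (A : Finset V) :
    ∑ v ∈ A, G.div f v
      = ∑ v ∈ A, ∑ w ∈ univ.filter (fun w => w ∉ A), (G.E v w : ℤ) * (f w - f v) := by
  have split : ∀ v, G.div f v = (∑ w ∈ A, (G.E v w : ℤ) * (f w - f v))
      + ∑ w ∈ univ.filter (fun w => w ∉ A), (G.E v w : ℤ) * (f w - f v) := by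
    intro v
    have h1 : univ.filter (fun w => w ∈ A) = A := by ext w; simp
    rw [MultiGraph.div, ← Finset.sum_filter_add_sum_filter_not univ (fun w => w ∈ A)
      (fun w => (G.E v w : ℤ) * (f w - f v)), h1]
  rw [Finset.sum_congr rfl fun v _ => split v, Finset.sum_add_distrib]
  have h0 : ∑ v ∈ A, ∑ w ∈ A, (G.E v w : ℤ) * (f w - f v) = 0 := by
    apply antisym_sum_zero
    intro v w
    rw [G.symm v w]; push_cast; ring
  rw [h0, zero_add]

lemma deg_div (G : MultiGraph V) (f : V → ℤ) : deg (G.div f) = 0 := by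
  have h := sum_div_eq G f univ
  simp only [Finset.mem_univ, not_true_eq_false, Finset.filter_false] at h
  simpa [BN.deg] using h

lemma div_add (G : MultiGraph V) (f g : V → ℤ) :
    G.div (f + g) = G.div f + G.div g := by
  funext v
  simp only [MultiGraph.div, Pi.add_apply, ← Finset.sum_add_distrib]
  exact Finset.sum_congr rfl fun w _ => by ring

lemma div_zero (G : MultiGraph V) : G.div 0 = 0 := by
  funext v; simp [MultiGraph.div]

lemma div_neg (G : MultiGraph V) (f : V → ℤ) : G.div (-f) = - G.div f := by
  funext v
  simp only [MultiGraph.div, Pi.neg_apply, ← Finset.sum_neg_distrib]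
  exact Finset.sum_congr rfl fun w _ => by ring

lemma MultiGraph.Principal.zero (G : MultiGraph V) : G.Principal 0 := ⟨0, (div_zero G).symm⟩

lemma MultiGraph.Principal.add {G : MultiGraph V} {d d' : V → ℤ} (h : G.Principal d)
    (h' : G.Principal d') : G.Principal (d + d') := by
  obtain ⟨f, rfl⟩ := h; obtain ⟨g, rfl⟩ := h'
  exact ⟨f + g, (div_add G f g).symm⟩

lemma MultiGraph.Principal.neg {G : MultiGraph V} {d : V → ℤ} (h : G.Principal d) :
    G.Principal (-d) := by
  obtain ⟨f, rfl⟩ := h; exact ⟨-f, (div_neg G f).symm⟩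

lemma MultiGraph.LinEquiv.refl (G : MultiGraph V) (d : V → ℤ) : G.LinEquiv d d := by
  simpa [MultiGraph.LinEquiv] using Principal.zero G

lemma MultiGraph.LinEquiv.symm {G : MultiGraph V} {d d' : V → ℤ} (h : G.LinEquiv d d') :
    G.LinEquiv d' d := by
  have := Principal.neg h
  simpa [MultiGraph.LinEquiv] using this

lemma MultiGraph.LinEquiv.trans {G : MultiGraph V} {d d' d'' : V → ℤ} (h : G.LinEquiv d d')
    (h' : G.LinEquiv d' d'') : G.LinEquiv d d'' := by
  have := Principal.add h h'
  simpa [MultiGraph.LinEquiv] using this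

lemma deg_eq_of_linEquiv {G : MultiGraph V} {d d' : V → ℤ} (h : G.LinEquiv d d') :
    deg d = deg d' := by
  obtain ⟨f, hf⟩ := h
  have h2 : deg (d' - d) = 0 := by rw [hf]; exact deg_div G f
  have h3 : deg (d' - d) = deg d' - deg d := by
    simp [BN.deg, Finset.sum_sub_distrib]
  omega

lemma MultiGraph.Winnable.of_linEquiv {G : MultiGraph V} {d d' : V → ℤ}
    (h : G.LinEquiv d d') (hw : G.Winnable d) : G.Winnable d' := by
  obtain ⟨e, he, hde⟩ := hw
  exact ⟨e, he, (LinEquiv.symm h).trans hde⟩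

lemma Effective.winnable {G : MultiGraph V} {e : V → ℤ} (he : Effective e) :
    G.Winnable e := ⟨e, he, MultiGraph.LinEquiv.refl G e⟩

lemma MultiGraph.Winnable.add {G : MultiGraph V} {d d' : V → ℤ} (h : G.Winnable d)
    (h' : G.Winnable d') : G.Winnable (d + d') := by
  obtain ⟨e, he, f, hf⟩ := h
  obtain ⟨e', he', f', hf'⟩ := h'
  refine ⟨e + e', fun v => add_nonneg (he v) (he' v), ⟨f + f', ?_⟩⟩
  rw [div_add]; rw [show e + e' - (d + d') = (e - d) + (e' - d') by ring, hf, hf']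

lemma Effective.add {e e' : V → ℤ} (h : Effective e) (h' : Effective e') :
    Effective (e + e') := fun v => add_nonneg (h v) (h' v)

lemma div_apply (G : MultiGraph V) (f : V → ℤ) (v : V) :
    G.div f v = ∑ w, (G.E v w : ℤ) * (f w - f v) := rfl

/-- The divisor attached to an injective numbering `ρ`. -/
noncomputable def nu (G : MultiGraph V) (ρ : V → ℕ) : V → ℤ :=
  fun v => (∑ w ∈ univ.filter (fun w => ρ w < ρ v), (G.E v w : ℤ)) - 1

lemma nu_unwinnable [Nonempty V] (G : MultiGraph V) {ρ : V → ℕ}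
    (hρ : Function.Injective ρ) : ¬ G.Winnable (nu G ρ) := by
  rintro ⟨e, he, f, hf⟩
  obtain ⟨v0, -, hv0⟩ := Finset.exists_max_image univ f univ_nonempty
  have hAne : (univ.filter (fun w => f v0 ≤ f w)).Nonempty :=
    ⟨v0, by simp⟩
  obtain ⟨v, hvA, hv⟩ := Finset.exists_min_image _ ρ hAne
  simp only [Finset.mem_filter, Finset.mem_univ, true_and] at hvA
  have hfv : ∀ w, f w ≤ f v := fun w => le_trans (hv0 w (mem_univ w)) hvA
  have hsmall : ∀ w, ρ w < ρ v → f w - f v ≤ -1 := by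
    intro w hw
    by_contra hcon
    have h1 : f v ≤ f w := by omega
    have h2 : w ∈ univ.filter (fun w => f v0 ≤ f w) := by
      simp only [Finset.mem_filter, Finset.mem_univ, true_and]
      exact le_trans hvA h1
    exact absurd (hv w h2) (by omega)
  have hev : e v - nu G ρ v = G.div f v := congrFun hf v
  have hsplit := Finset.sum_filter_add_sum_filter_not univ (fun w => ρ w < ρ v)
      (fun w => (G.E v w : ℤ) * (f w - f v))
  have hb1 : ∑ w ∈ univ.filter (fun w => ρ w < ρ v), (G.E v w : ℤ) * (f w - f v)
      ≤ ∑ w ∈ univ.filter (fun w => ρ w < ρ v), -(G.E v w : ℤ) := by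
    refine Finset.sum_le_sum fun w hw => ?_
    simp only [Finset.mem_filter] at hw
    have := hsmall w hw.2
    nlinarith [Int.natCast_nonneg (G.E v w)]
  have hb2 : ∑ w ∈ univ.filter (fun w => ¬ ρ w < ρ v), (G.E v w : ℤ) * (f w - f v) ≤ 0 := by
    refine Finset.sum_nonpos fun w _ => ?_
    have := hfv w
    nlinarith [Int.natCast_nonneg (G.E v w)]
  have hdivb : G.div f v ≤ -(∑ w ∈ univ.filter (fun w => ρ w < ρ v), (G.E v w : ℤ)) := by
    have hd : G.div f v = (∑ w ∈ univ.filter (fun w => ρ w < ρ v), (G.E v w : ℤ) * (f w - f v))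
        + ∑ w ∈ univ.filter (fun w => ¬ ρ w < ρ v), (G.E v w : ℤ) * (f w - f v) := by
      rw [div_apply]; exact hsplit.symm
    rw [Finset.sum_neg_distrib] at hb1
    linarith
  have hnu : nu G ρ v = (∑ w ∈ univ.filter (fun w => ρ w < ρ v), (G.E v w : ℤ)) - 1 := rfl
  have := he v
  omega

/-- positive part degree -/
noncomputable def degp (x : V → ℤ) : ℕ := ∑ v, (x v).toNat

lemma degp_cast (x : V → ℤ) : (degp x : ℤ) = ∑ v, ((x v).toNat : ℤ) := by
  rw [degp]; push_cast; rfl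

lemma degp_neg (x : V → ℤ) : (degp (-x) : ℤ) = degp x - deg x := by
  rw [degp_cast, degp_cast, BN.deg, ← Finset.sum_sub_distrib]
  refine Finset.sum_congr rfl fun v _ => ?_
  simp only [Pi.neg_apply]
  omega

lemma degp_eff {e : V → ℤ} (he : Effective e) : (degp e : ℤ) = deg e := by
  rw [degp_cast, BN.deg]
  exact Finset.sum_congr rfl fun v _ => Int.toNat_of_nonneg (he v)

lemma degp_sub_le {e e' : V → ℤ} (h' : Effective e') : degp (e - e') ≤ degp e := by
  refine Finset.sum_le_sum fun v _ => ?_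
  have := h' v
  simp only [Pi.sub_apply]
  omega

lemma degp_eq_zero {x : V → ℤ} (h : degp x = 0) : ∀ v, x v ≤ 0 := by
  intro v
  have := Finset.sum_eq_zero_iff.mp h v (mem_univ v)
  omega

/-- positive part of a divisor -/
noncomputable def posPart (x : V → ℤ) : V → ℤ := fun v => ((x v).toNat : ℤ)

lemma posPart_eff (x : V → ℤ) : Effective (posPart x) := fun v => Int.natCast_nonneg _

lemma posPart_sub_eff (x : V → ℤ) : Effective (posPart x - x) := by
  intro v; simp only [posPart, Pi.sub_apply]; omega

lemma deg_posPart (x : V → ℤ) : deg (posPart x) = degp x := by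
  rw [BN.deg, degp_cast]; rfl

lemma div_one_apply (G : MultiGraph V) (u v : V) :
    G.div (one u) v = (G.E v u : ℤ) - (if v = u then (∑ w, (G.E v w : ℤ)) else 0) := by
  rw [div_apply]
  have h1 : ∑ w, (G.E v w : ℤ) * one u w = (G.E v u : ℤ) := by
    simp only [one, mul_ite, mul_one, mul_zero]
    rw [Finset.sum_ite_eq' univ u (fun w => (G.E v w : ℤ))]
    simp
  have h2 : ∑ w, (G.E v w : ℤ) * one u v = if v = u then (∑ w, (G.E v w : ℤ)) else 0 := by
    by_cases h : v = u
    · simp [one, if_pos h]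
    · simp [one, if_neg h]
  calc ∑ w, (G.E v w : ℤ) * (one u w - one u v)
      = (∑ w, (G.E v w : ℤ) * one u w) - ∑ w, (G.E v w : ℤ) * one u v := by
        rw [← Finset.sum_sub_distrib]
        exact Finset.sum_congr rfl fun w _ => by ring
    _ = (G.E v u : ℤ) - (if v = u then (∑ w, (G.E v w : ℤ)) else 0) := by rw [h1, h2]

lemma div_smul (G : MultiGraph V) (t : ℤ) (f : V → ℤ) :
    G.div (fun w => t * f w) = fun v => t * G.div f v := by
  funext v
  rw [MultiGraph.div, MultiGraph.div, Finset.mul_sum]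
  exact Finset.sum_congr rfl fun w _ => by ring

lemma supply (G : MultiGraph V) {q : V} (hc : G.Connected) (v : V) :
    v = q ∨ ∀ N : ℤ, ∃ g : V → ℤ, (∀ w, w ≠ q → 0 ≤ G.div g w) ∧ N ≤ G.div g v := by
  have h := hc q v
  induction h with
  | refl => exact Or.inl rfl
  | @tail b c hqb hbc ih =>
    by_cases hcq : c = q
    · exact Or.inl hcq
    right
    intro N
    have hbc' : (1 : ℤ) ≤ (G.E c b : ℤ) := by
      have := G.symm b c
      omega
    have hcb : c ≠ b := by
      intro h; rw [h] at hbc; rw [G.noDiag] at hbc; omega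
    set t : ℤ := max N 0 with ht
    have ht0 : 0 ≤ t := le_max_right _ _
    rcases ih with rfl | ih
    · -- b = q : fire q directly
      refine ⟨fun w => t * one b w, ?_, ?_⟩
      · intro w hw
        rw [congrFun (div_smul G t (one b)) w, div_one_apply, if_neg hw, sub_zero]
        positivity
      · rw [congrFun (div_smul G t (one b)) c, div_one_apply, if_neg hcb]
        calc N ≤ t * 1 := by omega
        _ ≤ t * (G.E c b : ℤ) := by
              exact mul_le_mul_of_nonneg_left hbc' ht0
    · obtain ⟨g0, hg0, hg0b⟩ := ih (t * (∑ w, (G.E b w : ℤ)))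
      refine ⟨g0 + fun w => t * one b w, ?_, ?_⟩
      · intro w hw
        rw [div_add, Pi.add_apply, congrFun (div_smul G t (one b)) w, div_one_apply]
        by_cases hwb : w = b
        · subst hwb
          rw [if_pos rfl]
          have h2 := hg0b
          have h3 : (G.E w w : ℤ) = 0 := by simp [G.noDiag]
          nlinarith
        · rw [if_neg hwb]
          have h5 := hg0 w hw
          have h6 : (0:ℤ) ≤ (G.E w b : ℤ) := by positivity
          nlinarith
      · rw [div_add, Pi.add_apply, congrFun (div_smul G t (one b)) c, div_one_apply,
          if_neg hcb]
        rw [sub_zero]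
        have h5 := hg0 c hcq
        have hN : N ≤ t := le_max_left _ _
        have h4 : t * 1 ≤ t * (G.E c b : ℤ) := mul_le_mul_of_nonneg_left hbc' ht0
        linarith

lemma div_sum {α : Type*} (G : MultiGraph V) (s : Finset α) (F : α → V → ℤ) :
    G.div (∑ a ∈ s, F a) = ∑ a ∈ s, G.div (F a) := by
  induction s using Finset.cons_induction with
  | empty => simpa using div_zero G
  | cons a s ha ih => rw [Finset.sum_cons, div_add, ih, Finset.sum_cons]

lemma phase1 (G : MultiGraph V) {q : V} (hc : G.Connected) (d : V → ℤ) :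
    ∃ f, ∀ v, v ≠ q → 0 ≤ (d + G.div f) v := by
  have H : ∀ v : V, ∃ g : V → ℤ, (∀ w, w ≠ q → 0 ≤ G.div g w) ∧ (v ≠ q → -d v ≤ G.div g v) := by
    intro v
    rcases supply G hc v with h | h
    · exact ⟨0, by simp [div_zero], fun hv => absurd h hv⟩
    · obtain ⟨g, hg1, hg2⟩ := h (-d v)
      exact ⟨g, hg1, fun _ => hg2⟩
  choose g hg1 hg2 using H
  refine ⟨∑ u ∈ univ.erase q, g u, fun v hv => ?_⟩
  rw [Pi.add_apply, div_sum]
  simp only [Finset.sum_apply]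
  have hvmem : v ∈ univ.erase q := by simp [hv]
  rw [← Finset.add_sum_erase _ _ hvmem]
  have h1 : 0 ≤ ∑ u ∈ (univ.erase q).erase v, G.div (g u) v :=
    Finset.sum_nonneg fun u _ => hg1 u v hv
  have h2 := hg2 v hv
  linarith

lemma outdeg_cast (G : MultiGraph V) (A : Finset V) (v : V) :
    (G.outdeg A v : ℤ) = ∑ w ∈ univ.filter (fun w => w ∉ A), (G.E v w : ℤ) := by
  rw [MultiGraph.outdeg]; push_cast; rfl

lemma div_indicator (G : MultiGraph V) (A : Finset V) (v : V) :
    G.div (fun w => if w ∈ A then (1:ℤ) else 0) v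
      = (if v ∈ A then -(G.outdeg A v : ℤ)
          else ∑ w ∈ univ.filter (fun w => w ∈ A), (G.E v w : ℤ)) := by
  rw [div_apply,
    ← Finset.sum_filter_add_sum_filter_not univ (fun w => w ∈ A)
      (fun w => (G.E v w : ℤ) * ((if w ∈ A then (1:ℤ) else 0) - (if v ∈ A then (1:ℤ) else 0)))]
  by_cases hv : v ∈ A
  · simp only [if_pos hv]
    have e1 : ∑ x ∈ univ.filter (fun x => x ∈ A),
        (G.E v x : ℤ) * ((if x ∈ A then (1:ℤ) else 0) - 1) = 0 := by
      refine Finset.sum_eq_zero fun w hw => ?_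
      simp only [Finset.mem_filter, Finset.mem_univ, true_and] at hw
      rw [if_pos hw]; ring
    have e2 : ∑ x ∈ univ.filter (fun x => ¬ x ∈ A),
        (G.E v x : ℤ) * ((if x ∈ A then (1:ℤ) else 0) - 1)
        = - ∑ x ∈ univ.filter (fun x => ¬ x ∈ A), (G.E v x : ℤ) := by
      rw [← Finset.sum_neg_distrib]
      refine Finset.sum_congr rfl fun w hw => ?_
      simp only [Finset.mem_filter, Finset.mem_univ, true_and] at hw
      rw [if_neg hw]; ring
    rw [e1, e2, zero_add, outdeg_cast]
  · simp only [if_neg hv]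
    have e1 : ∑ x ∈ univ.filter (fun x => x ∈ A),
        (G.E v x : ℤ) * ((if x ∈ A then (1:ℤ) else 0) - 0)
        = ∑ x ∈ univ.filter (fun x => x ∈ A), (G.E v x : ℤ) := by
      refine Finset.sum_congr rfl fun w hw => ?_
      simp only [Finset.mem_filter, Finset.mem_univ, true_and] at hw
      rw [if_pos hw]; ring
    have e2 : ∑ x ∈ univ.filter (fun x => ¬ x ∈ A),
        (G.E v x : ℤ) * ((if x ∈ A then (1:ℤ) else 0) - 0) = 0 := by
      refine Finset.sum_eq_zero fun w hw => ?_
      simp only [Finset.mem_filter, Finset.mem_univ, true_and] at hw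
      rw [if_neg hw]; ring
    rw [e1, e2, add_zero]

lemma exists_reduced (G : MultiGraph V) {q : V} (hc : G.Connected) (d : V → ℤ) :
    ∃ f : V → ℤ, G.Reduced q (d + G.div f) := by
  classical
  obtain ⟨f₁, hf₁⟩ := phase1 G hc d
  set d₁ : V → ℤ := d + G.div f₁ with hd₁
  set C : ℤ := ∑ v ∈ univ.erase q, d₁ v with hC
  have hC0 : 0 ≤ C := Finset.sum_nonneg fun v hv => hf₁ v (Finset.ne_of_mem_erase hv)
  set F : Set (V → ℤ) :=
    {f | (∀ v, 0 ≤ f v) ∧ f q = 0 ∧ ∀ v, v ≠ q → 0 ≤ (d₁ + G.div f) v} with hF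
  -- Lipschitz bound along edges
  have lip : ∀ f ∈ F, ∀ u v : V, 0 < G.E u v → f v ≤ f u + C := by
    intro f hf u v he
    obtain ⟨hf0, hfq, hfd⟩ := hf
    by_contra hcon
    push_neg at hcon
    set A : Finset V := univ.filter (fun w => f u + 1 ≤ f w) with hA
    have hqA : q ∉ A := by
      simp only [hA, Finset.mem_filter, Finset.mem_univ, true_and, not_le, hfq]
      have := hf0 u; omega
    have hvA : v ∈ A := by
      simp only [hA, Finset.mem_filter, Finset.mem_univ, true_and]
      omega
    have huA : u ∉ A := by
      simp only [hA, Finset.mem_filter, Finset.mem_univ, true_and]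
      omega
    have hsum : 0 ≤ ∑ w ∈ A, (d₁ w + G.div f w) := by
      refine Finset.sum_nonneg fun w hw => ?_
      have := hfd w (by rintro rfl; exact hqA hw)
      simpa using this
    rw [Finset.sum_add_distrib] at hsum
    have hb := sum_div_eq G f A
    have tnn : ∀ w ∈ A, ∀ x ∈ univ.filter (fun x => x ∉ A), (G.E w x:ℤ)*(f x - f w) ≤ 0 := by
      intro w hw x hx
      simp only [hA, Finset.mem_filter, Finset.mem_univ, true_and] at hw hx
      push_neg at hx
      have h8 : (0:ℤ) ≤ (G.E w x : ℤ) := by positivity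
      nlinarith
    have humem : u ∈ univ.filter (fun x => x ∉ A) := by
      simp only [Finset.mem_filter, Finset.mem_univ, true_and]; exact huA
    have innerv : ∑ x ∈ univ.filter (fun x => x ∉ A), (G.E v x:ℤ)*(f x - f v) ≤ f u - f v := by
      rw [← Finset.add_sum_erase _ _ humem]
      have r1 : ∑ x ∈ (univ.filter (fun x => x ∉ A)).erase u, (G.E v x:ℤ)*(f x - f v) ≤ 0 :=
        Finset.sum_nonpos fun x hx => tnn v hvA x (Finset.mem_of_mem_erase hx)
      have r2 : (G.E v u:ℤ)*(f u - f v) ≤ 1*(f u - f v) := by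
        have h1 : (1:ℤ) ≤ (G.E v u:ℤ) := by
          have := G.symm u v; omega
        have h2 : f u - f v < 0 := by omega
        nlinarith
      linarith
    have hbd : ∑ w ∈ A, ∑ x ∈ univ.filter (fun x => x ∉ A), (G.E w x : ℤ) * (f x - f w)
        ≤ f u - f v := by
      rw [← Finset.add_sum_erase _ _ hvA]
      have r3 : ∑ w ∈ A.erase v, ∑ x ∈ univ.filter (fun x => x ∉ A), (G.E w x:ℤ)*(f x - f w) ≤ 0 :=
        Finset.sum_nonpos fun w hw =>
          Finset.sum_nonpos fun x hx => tnn w (Finset.mem_of_mem_erase hw) x hx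
      linarith
    have hsub : A ⊆ univ.erase q := fun w hw => by
      simp only [Finset.mem_erase, Finset.mem_univ, and_true]
      rintro rfl; exact hqA hw
    have hAsum : ∑ w ∈ A, d₁ w ≤ C := by
      refine Finset.sum_le_sum_of_subset_of_nonneg hsub fun w hw hwA => ?_
      exact hf₁ w (Finset.ne_of_mem_erase hw)
    rw [hb] at hsum
    linarith
  -- boundedness
  have bdd : ∀ v : V, ∃ b : ℤ, ∀ f ∈ F, f v ≤ b := by
    intro v
    have h := hc q v
    induction h with
    | refl => exact ⟨0, fun f hf => le_of_eq hf.2.1⟩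
    | @tail b c hqb hbc ih =>
      obtain ⟨B, hB⟩ := ih
      exact ⟨B + C, fun f hf => le_trans (lip f hf b c hbc) (by have := hB f hf; omega)⟩
  choose bnd hbnd using bdd
  have hSne : ∃ s : ℤ, s ∈ {s : ℤ | ∃ f ∈ F, s = ∑ v, f v} := by
    refine ⟨0, 0, ⟨fun v => le_refl 0, rfl, fun v hv => ?_⟩, by simp⟩
    simpa [div_zero] using hf₁ v hv
  have hbdd : ∃ b : ℤ, ∀ z : ℤ, (∃ f ∈ F, z = ∑ v, f v) → z ≤ b := by
    refine ⟨∑ v, bnd v, ?_⟩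
    rintro z ⟨f, hfF, rfl⟩
    exact Finset.sum_le_sum fun v _ => hbnd v f hfF
  obtain ⟨M, ⟨f0, hf0F, hf0s⟩, hMub⟩ := Int.exists_greatest_of_bdd hbdd hSne
  obtain ⟨hf00, hf0q, hf0d⟩ := hf0F
  refine ⟨f₁ + f0, ?_, ?_⟩
  · intro v hv
    have h7 := hf0d v hv
    simp only [hd₁, Pi.add_apply, div_add] at h7 ⊢
    linarith
  · intro A hAne hqA
    by_contra hcon
    push_neg at hcon
    set find : V → ℤ := fun w => if w ∈ A then (1:ℤ) else 0 with hfind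
    have hdiv := div_indicator G A
    have hmem : (f0 + find) ∈ F := by
      refine ⟨fun v => ?_, ?_, fun v hv => ?_⟩
      · have := hf00 v
        simp only [Pi.add_apply, hfind]
        split <;> omega
      · simp only [Pi.add_apply, hfind, if_neg hqA, hf0q]; ring
      · have hd7 := hdiv v
        by_cases hvA : v ∈ A
        · rw [if_pos hvA, outdeg_cast] at hd7
          have h9 := hcon v hvA
          rw [outdeg_cast] at h9
          simp only [Pi.add_apply, div_add, hd₁, hfind] at h9 ⊢
          rw [hd7]
          linarith
        · rw [if_neg hvA] at hd7
          have h9 := hf0d v hv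
          have h10 : 0 ≤ ∑ w ∈ univ.filter (fun w => w ∈ A), (G.E v w : ℤ) :=
            Finset.sum_nonneg fun w _ => by positivity
          simp only [Pi.add_apply, div_add, hd₁, hfind] at h9 ⊢
          rw [hd7]
          linarith
    have hfsum : ∑ v, find v = (A.card : ℤ) := by
      simp only [hfind]
      rw [Finset.sum_boole]
      congr 1
      exact congrArg Finset.card (by ext w; simp)
    have hle := hMub (M + A.card) ⟨f0 + find, hmem, by
      simp only [Pi.add_apply, Finset.sum_add_distrib, hfsum, ← hf0s]⟩
    have hcard : 0 < A.card := Finset.card_pos.mpr hAne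
    omega

lemma nu_apply (G : MultiGraph V) (ρ : V → ℕ) (v : V) :
    nu G ρ v = (∑ w ∈ univ.filter (fun w => ρ w < ρ v), (G.E v w : ℤ)) - 1 := rfl

lemma greedy_rec (G : MultiGraph V) {q : V} {d' : V → ℤ} (hred : G.Reduced q d') :
    ∀ A : Finset V, q ∉ A →
    ∃ ρ : V → ℕ, Set.InjOn ρ A ∧ (∀ v ∈ A, 1 ≤ ρ v ∧ ρ v ≤ A.card) ∧
      ∀ v ∈ A, d' v < ∑ w ∈ univ.filter (fun w => w ∉ A ∨ ρ w < ρ v), (G.E v w : ℤ) := by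
  intro A
  induction A using Finset.strongInduction with
  | _ A IH =>
    intro hqA
    rcases A.eq_empty_or_nonempty with rfl | hAne
    · exact ⟨fun _ => 1, by simp [Set.InjOn], by simp, by simp⟩
    obtain ⟨v₀, hv₀A, hv₀⟩ := hred.2 A hAne hqA
    have hcardA : 0 < A.card := Finset.card_pos.mpr ⟨v₀, hv₀A⟩
    obtain ⟨ρ, hinj, hbound, hcond⟩ := IH (A.erase v₀) (Finset.erase_ssubset hv₀A)
        (fun h => hqA (Finset.mem_of_mem_erase h))
    have hcard : (A.erase v₀).card = A.card - 1 := Finset.card_erase_of_mem hv₀A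
    refine ⟨fun w => if w = v₀ then 1 else ρ w + 1, ?_, ?_, ?_⟩
    · intro a ha b hb hab
      simp only at hab
      by_cases h1 : a = v₀ <;> by_cases h2 : b = v₀
      · rw [h1, h2]
      · rw [if_pos h1, if_neg h2] at hab
        have := (hbound b (Finset.mem_erase.mpr ⟨h2, hb⟩)).1
        omega
      · rw [if_neg h1, if_pos h2] at hab
        have := (hbound a (Finset.mem_erase.mpr ⟨h1, ha⟩)).1
        omega
      · rw [if_neg h1, if_neg h2] at hab
        exact hinj (Finset.mem_erase.mpr ⟨h1, ha⟩) (Finset.mem_erase.mpr ⟨h2, hb⟩) (by omega)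
    · intro v hvA
      dsimp only
      by_cases h1 : v = v₀
      · rw [if_pos h1]
        omega
      · rw [if_neg h1]
        have := hbound v (Finset.mem_erase.mpr ⟨h1, hvA⟩)
        omega
    · intro v hvA
      dsimp only
      by_cases h1 : v = v₀
      · subst h1
        rw [outdeg_cast] at hv₀
        refine lt_of_lt_of_le hv₀ (Finset.sum_le_sum_of_subset_of_nonneg (fun w hw => ?_)
          (fun w _ _ => by positivity))
        simp only [Finset.mem_filter, Finset.mem_univ, true_and] at hw ⊢
        exact Or.inl hw
      · have h2 := hcond v (Finset.mem_erase.mpr ⟨h1, hvA⟩)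
        refine lt_of_lt_of_le h2 (Finset.sum_le_sum_of_subset_of_nonneg (fun w hw => ?_)
          (fun w _ _ => by positivity))
        simp only [Finset.mem_filter, Finset.mem_univ, true_and] at hw ⊢
        have hbv := (hbound v (Finset.mem_erase.mpr ⟨h1, hvA⟩)).1
        rw [if_neg h1]
        by_cases h3 : w = v₀
        · subst h3
          right; rw [if_pos rfl]; omega
        · rw [if_neg h3]
          rcases hw with hw | hw
          · left; intro hwA; exact hw (Finset.mem_erase.mpr ⟨h3, hwA⟩)
          · right; omega

lemma exists_nu_ge (G : MultiGraph V) {q : V} {d' : V → ℤ} (hred : G.Reduced q d')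
    (hq : d' q < 0) : ∃ ρ : V → ℕ, Function.Injective ρ ∧ ∀ v, d' v ≤ nu G ρ v := by
  obtain ⟨ρ, hinj, hbound, hcond⟩ := greedy_rec G hred (univ.erase q) (by simp)
  refine ⟨fun w => if w = q then 0 else ρ w, ?_, ?_⟩
  · intro a b hab
    simp only at hab
    by_cases h1 : a = q <;> by_cases h2 : b = q
    · rw [h1, h2]
    · rw [if_pos h1, if_neg h2] at hab
      have := (hbound b (by simp [h2])).1
      omega
    · rw [if_neg h1, if_pos h2] at hab
      have := (hbound a (by simp [h1])).1
      omega
    · rw [if_neg h1, if_neg h2] at hab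
      exact hinj (by simp [h1]) (by simp [h2]) hab
  · intro v
    rw [nu_apply]
    by_cases h1 : v = q
    · subst h1
      have hemp : univ.filter
          (fun w => (if w = v then 0 else ρ w) < (if v = v then 0 else ρ v)) = ∅ := by
        refine Finset.filter_eq_empty_iff.mpr fun {w} _ => ?_
        rw [if_pos rfl]
        omega
      rw [hemp]
      simp only [Finset.sum_empty]
      omega
    · have h2 := hcond v (by simp [h1])
      have hfeq : univ.filter
            (fun w => (if w = q then 0 else ρ w) < (if v = q then 0 else ρ v))
          = univ.filter (fun w => w ∉ univ.erase q ∨ ρ w < ρ v) := by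
        ext w
        simp only [Finset.mem_filter, Finset.mem_univ, true_and, if_neg h1]
        have hbv := (hbound v (by simp [h1])).1
        by_cases h3 : w = q
        · subst h3
          rw [if_pos rfl]
          constructor
          · intro _; left; simp
          · intro _; omega
        · rw [if_neg h3]
          constructor
          · exact fun h => Or.inr h
          · rintro (h | h)
            · exact absurd (Finset.mem_erase.mpr ⟨h3, Finset.mem_univ w⟩) h
            · exact h
      rw [hfeq]
      omega

lemma unwinnable_nu [Nonempty V] (G : MultiGraph V) (hc : G.Connected) {d : V → ℤ}
    (hd : ¬ G.Winnable d) : ∃ ρ : V → ℕ, Function.Injective ρ ∧ G.Winnable (nu G ρ - d) := by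
  obtain ⟨f, hred⟩ := exists_reduced G (q := Classical.arbitrary V) hc d
  set q := Classical.arbitrary V
  set d' : V → ℤ := d + G.div f with hd'
  have hequiv : G.LinEquiv d d' :=
    ⟨f, by funext v; simp only [hd', Pi.sub_apply, Pi.add_apply]; ring⟩
  have hq : d' q < 0 := by
    by_contra hq0
    push_neg at hq0
    have heff : Effective d' := by
      intro v
      by_cases hv : v = q
      · rw [hv]; exact hq0
      · exact hred.1 v hv
    exact hd (Winnable.of_linEquiv hequiv.symm (heff.winnable))
  obtain ⟨ρ, hinj, hge⟩ := exists_nu_ge G hred hq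
  refine ⟨ρ, hinj, ?_⟩
  have heff : Effective (nu G ρ - d') := fun v => by
    have := hge v; simp only [Pi.sub_apply]; omega
  refine Winnable.of_linEquiv (d := nu G ρ - d') ⟨f, ?_⟩ heff.winnable
  funext v
  simp only [hd', Pi.sub_apply, Pi.add_apply]
  ring

lemma MultiGraph.Winnable.add_eff {G : MultiGraph V} {d e : V → ℤ} (h : G.Winnable d)
    (he : Effective e) : G.Winnable (d + e) := h.add he.winnable

/-- The set of `deg⁺(d' - ν)` over all `d' ∼ d` and all `ν` from injective numberings. -/
noncomputable def Tset (G : MultiGraph V) (d : V → ℤ) : Set ℕ :=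
  {t | ∃ (f : V → ℤ) (ρ : V → ℕ), Function.Injective ρ ∧ t = degp (d + G.div f - nu G ρ)}

lemma exists_inj : ∃ ρ : V → ℕ, Function.Injective ρ :=
  ⟨fun v => ((Fintype.equivFin V) v : ℕ),
    Fin.val_injective.comp (Fintype.equivFin V).injective⟩

lemma Tset_nonempty (G : MultiGraph V) (d : V → ℤ) : (Tset G d).Nonempty := by
  obtain ⟨ρ, hρ⟩ := exists_inj (V := V)
  exact ⟨degp (d + G.div 0 - nu G ρ), 0, ρ, hρ, rfl⟩

lemma Tset_blocker [Nonempty V] (G : MultiGraph V) {d : V → ℤ} {t : ℕ} (ht : t ∈ Tset G d) :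
    ∃ e : V → ℤ, Effective e ∧ deg e = (t : ℤ) ∧ ¬ G.Winnable (d - e) := by
  obtain ⟨f, ρ, hρ, rfl⟩ := ht
  set x : V → ℤ := d + G.div f - nu G ρ with hx
  refine ⟨posPart x, posPart_eff x, deg_posPart x, ?_⟩
  intro hw
  apply nu_unwinnable G hρ
  have h1 : G.Winnable (d - posPart x + (posPart x - x)) := hw.add_eff (posPart_sub_eff x)
  refine Winnable.of_linEquiv (d := d - posPart x + (posPart x - x)) ⟨f, ?_⟩ h1
  funext v
  simp only [hx, Pi.sub_apply, Pi.add_apply]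
  ring

lemma Tset_of_unwinnable [Nonempty V] (G : MultiGraph V) (hc : G.Connected) {d e : V → ℤ}
    (he : Effective e) (hw : ¬ G.Winnable (d - e)) :
    ∃ t ∈ Tset G d, (t : ℤ) ≤ deg e := by
  obtain ⟨ρ, hρ, hwin⟩ := unwinnable_nu G hc hw
  obtain ⟨e', he', f, hf⟩ := hwin
  refine ⟨degp (d + G.div (-f) - nu G ρ), ⟨-f, ρ, hρ, rfl⟩, ?_⟩
  have hxe : d + G.div (-f) - nu G ρ = e - e' := by
    funext v
    have h2 := congrFun hf v
    rw [div_neg]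
    simp only [Pi.sub_apply, Pi.add_apply, Pi.neg_apply] at h2 ⊢
    linarith
  rw [hxe]
  calc (degp (e - e') : ℤ) ≤ (degp e : ℤ) := by exact_mod_cast degp_sub_le he'
  _ = deg e := degp_eff he

lemma rank_eq_sInf [Nonempty V] (G : MultiGraph V) (hc : G.Connected) (d : V → ℤ) :
    G.rank d = ((sInf (Tset G d) : ℕ) : ℤ) - 1 := by
  set m := sInf (Tset G d) with hm
  have hmem : m ∈ Tset G d := Nat.sInf_mem (Tset_nonempty G d)
  obtain ⟨em, hem_eff, hem_deg, hem⟩ := Tset_blocker G hmem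
  by_cases hm0 : m = 0
  · have hem0 : em = 0 := by
      funext v
      have h2 : ∑ w, em w = 0 := by
        rw [← BN.deg, hem_deg, hm0]; rfl
      exact (Finset.sum_eq_zero_iff_of_nonneg (fun w _ => hem_eff w)).mp h2 v (mem_univ v)
    rw [hem0] at hem
    have hnw : ¬ G.Winnable d := by
      intro h; exact hem (by simpa using h)
    rw [MultiGraph.rank, if_neg hnw, hm0]
    rfl
  · have hwd : G.Winnable d := by
      by_contra hnw
      obtain ⟨t, htT, ht⟩ := Tset_of_unwinnable G hc (e := 0) (fun v => le_refl 0)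
        (by simpa using hnw)
      have hdeg0 : deg (0 : V → ℤ) = 0 := by simp [BN.deg]
      rw [hdeg0] at ht
      have ht0 : t = 0 := by omega
      have : m ≤ 0 := by rw [← ht0]; exact Nat.sInf_le htT
      omega
    rw [MultiGraph.rank, if_pos hwd]
    have hS : {s : ℕ | ∀ e : V → ℤ, Effective e → deg e = (s : ℤ) → G.Winnable (d - e)}
        = Set.Iic (m - 1) := by
      ext s
      simp only [Set.mem_setOf_eq, Set.mem_Iic]
      constructor
      · intro hs
        by_contra hcon
        push_neg at hcon
        have hms : m ≤ s := by omega
        obtain ⟨v₀⟩ := (inferInstance : Nonempty V)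
        set k : ℕ := s - m with hk
        set e' : V → ℤ := fun w => em w + (if w = v₀ then (k:ℤ) else 0) with he'
        have he'_eff : Effective e' := by
          intro v; simp only [he']
          have := hem_eff v
          split <;> omega
        have he'_deg : deg e' = (s : ℤ) := by
          rw [BN.deg, he']
          rw [Finset.sum_add_distrib, Finset.sum_ite_eq' univ v₀ (fun _ => (k:ℤ))]
          rw [← BN.deg, hem_deg]
          simp only [Finset.mem_univ, if_pos]
          omega
        have hwin' := hs e' he'_eff he'_deg
        apply hem
        have : G.Winnable (d - e' + (fun w => if w = v₀ then (k:ℤ) else 0)) :=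
          hwin'.add_eff (fun v => by split <;> omega)
        refine Winnable.of_linEquiv (d := d - e' + (fun w => if w = v₀ then (k:ℤ) else 0))
          ⟨0, ?_⟩ this
        rw [div_zero]
        funext v
        simp only [Pi.sub_apply, Pi.add_apply, he', Pi.zero_apply]
        ring
      · intro hs e he hdeg
        by_contra hnw
        obtain ⟨t, htT, ht⟩ := Tset_of_unwinnable G hc he hnw
        have h5 : m ≤ t := Nat.sInf_le htT
        rw [hdeg] at ht
        omega
    rw [hS, csSup_Iic]
    have h1 : 1 ≤ m := Nat.one_le_iff_ne_zero.mpr hm0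
    push_cast [Nat.cast_sub h1]
    ring

lemma K_apply_loopless (G : MultiGraph V) (hl : G.Loopless) (v : V) :
    G.K v = (∑ w, (G.E v w : ℤ)) - 2 := by
  rw [MultiGraph.K, MultiGraph.valence, hl v]
  push_cast
  ring

lemma sum_split_lt (G : MultiGraph V) {ρ : V → ℕ} (hρ : Function.Injective ρ) (v : V) :
    ∑ w, (G.E v w : ℤ)
      = (∑ w ∈ univ.filter (fun w => ρ w < ρ v), (G.E v w : ℤ))
      + ∑ w ∈ univ.filter (fun w => ρ v < ρ w), (G.E v w : ℤ) := by
  rw [← Finset.sum_filter_add_sum_filter_not univ (fun w => ρ w < ρ v) (fun w => (G.E v w:ℤ))]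
  congr 1
  have hins : univ.filter (fun w => ¬ ρ w < ρ v) = insert v (univ.filter (fun w => ρ v < ρ w)) := by
    ext w
    simp only [Finset.mem_filter, Finset.mem_univ, true_and, Finset.mem_insert, not_lt]
    constructor
    · intro h
      rcases lt_or_eq_of_le h with h | h
      · exact Or.inr h
      · exact Or.inl (hρ h.symm)
    · rintro (rfl | h)
      · exact le_refl _
      · exact le_of_lt h
  rw [hins, Finset.sum_insert (by simp)]
  simp [G.noDiag]

lemma nu_rev [Nonempty V] (G : MultiGraph V) (hl : G.Loopless) {ρ : V → ℕ}
    (hρ : Function.Injective ρ) :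
    ∃ ρ' : V → ℕ, Function.Injective ρ' ∧ nu G ρ' = G.K - nu G ρ := by
  set N₀ := univ.sup ρ with hN₀
  have hle : ∀ v, ρ v ≤ N₀ := fun v => Finset.le_sup (mem_univ v)
  refine ⟨fun v => N₀ - ρ v, ?_, ?_⟩
  · intro a b hab
    simp only at hab
    have ha := hle a
    have hb := hle b
    exact hρ (by omega)
  · funext v
    rw [nu_apply, Pi.sub_apply, K_apply_loopless G hl, nu_apply]
    have hfeq : univ.filter (fun w => N₀ - ρ w < N₀ - ρ v)
        = univ.filter (fun w => ρ v < ρ w) := by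
      ext w
      simp only [Finset.mem_filter, Finset.mem_univ, true_and]
      have := hle w
      have := hle v
      omega
    rw [hfeq]
    have := sum_split_lt G hρ v
    linarith

lemma deg_nu (G : MultiGraph V) {ρ : V → ℕ} (hρ : Function.Injective ρ) :
    2 * deg (nu G ρ) = (∑ v, ∑ w, (G.E v w : ℤ)) - 2 * (Fintype.card V : ℤ) := by
  have h1 : deg (nu G ρ)
      = (∑ v, ∑ w ∈ univ.filter (fun w => ρ w < ρ v), (G.E v w : ℤ)) - Fintype.card V := by
    simp [BN.deg, nu_apply, Finset.sum_sub_distrib, Finset.card_univ]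
  have h2 : ∑ v, ∑ w, (G.E v w:ℤ)
      = (∑ v, ∑ w ∈ univ.filter (fun w => ρ w < ρ v), (G.E v w:ℤ))
      + ∑ v, ∑ w ∈ univ.filter (fun w => ρ v < ρ w), (G.E v w:ℤ) := by
    rw [← Finset.sum_add_distrib]
    exact Finset.sum_congr rfl fun v _ => sum_split_lt G hρ v
  have h3 : ∑ v, ∑ w ∈ univ.filter (fun w => ρ v < ρ w), (G.E v w:ℤ)
      = ∑ v, ∑ w ∈ univ.filter (fun w => ρ w < ρ v), (G.E v w:ℤ) := by
    rw [Finset.sum_comm' (t' := univ) (s' := fun w => univ.filter (fun v => ρ v < ρ w))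
      (by intro x y; simp)]
    refine Finset.sum_congr rfl fun w _ => Finset.sum_congr rfl fun v _ => ?_
    rw [G.symm]
  linarith

lemma deg_sub (x y : V → ℤ) : deg (x - y) = deg x - deg y := by
  simp [BN.deg, Finset.sum_sub_distrib]

lemma deg_add (x y : V → ℤ) : deg (x + y) = deg x + deg y := by
  simp [BN.deg, Finset.sum_add_distrib]

lemma genus_eq [Nonempty V] (G : MultiGraph V) (hl : G.Loopless) {ρ : V → ℕ}
    (hρ : Function.Injective ρ) :
    genus G (fun _ => 0) = deg (nu G ρ) + 1 := by
  have h1 := deg_nu G hρ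
  have hl0 : ∑ v, G.loops v = 0 := Finset.sum_eq_zero fun v _ => hl v
  have hcast : ((∑ v, ∑ w, G.E v w : ℕ) : ℤ) = ∑ v, ∑ w, (G.E v w : ℤ) := by
    push_cast; rfl
  simp only [genus, MultiGraph.edgeCount, hl0, add_zero, Nat.cast_zero,
    Finset.sum_const_zero]
  omega

lemma deg_K (G : MultiGraph V) (hl : G.Loopless) {ρ : V → ℕ} (hρ : Function.Injective ρ) :
    deg G.K = 2 * deg (nu G ρ) := by
  have h1 := deg_nu G hρ
  have h2 : deg G.K = (∑ v, ∑ w, (G.E v w:ℤ)) - 2 * (Fintype.card V : ℤ) := by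
    simp [BN.deg, K_apply_loopless G hl, Finset.sum_sub_distrib, Finset.card_univ,
      mul_comm]
  omega

lemma Tset_shift [Nonempty V] (G : MultiGraph V) (hl : G.Loopless) (d : V → ℤ) {t : ℕ}
    (ht : t ∈ Tset G d) {ρ₀ : V → ℕ} (hρ₀ : Function.Injective ρ₀) :
    ∃ t' ∈ Tset G (G.K - d), (t' : ℤ) = (t : ℤ) - (deg d - deg (nu G ρ₀)) := by
  obtain ⟨f, ρ, hρ, rfl⟩ := ht
  obtain ⟨ρ', hρ', hnu'⟩ := nu_rev G hl hρ
  set x : V → ℤ := d + G.div f - nu G ρ with hx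
  have hy : G.K - d + G.div (-f) - nu G ρ' = -x := by
    rw [hnu', div_neg]
    funext v
    simp only [hx, Pi.sub_apply, Pi.add_apply, Pi.neg_apply]
    ring
  refine ⟨degp (G.K - d + G.div (-f) - nu G ρ'), ⟨-f, ρ', hρ', rfl⟩, ?_⟩
  rw [hy, degp_neg]
  have hdx : deg x = deg d - deg (nu G ρ₀) := by
    have e1 : deg (nu G ρ) = deg (nu G ρ₀) := by
      have := deg_nu G hρ
      have := deg_nu G hρ₀
      omega
    rw [hx, deg_sub, deg_add, deg_div, e1]
    ring
  omega

lemma riemann_roch_aux {V : Type} [Fintype V] [DecidableEq V]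
    (G : MultiGraph V) (hl : G.Loopless) (hc : G.Connected) (d : V → ℤ) :
    G.rank d - G.rank (G.K - d) = deg d - genus G (fun _ => 0) + 1 := by
  rcases isEmpty_or_nonempty V with hV | hV
  · have hwin : ∀ d0 : V → ℤ, G.Winnable d0 :=
      fun d0 => ⟨d0, fun v => isEmptyElim v, ⟨0, funext fun v => isEmptyElim v⟩⟩
    have hrank : ∀ d0 : V → ℤ, G.rank d0 = 0 := by
      intro d0
      rw [MultiGraph.rank, if_pos (hwin d0)]
      have hset : {s : ℕ | ∀ e : V → ℤ, Effective e → deg e = (s:ℤ) → G.Winnable (d0 - e)}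
          = Set.univ := by
        ext s
        simp only [Set.mem_setOf_eq, Set.mem_univ, iff_true]
        exact fun e _ _ => hwin _
      rw [hset]
      have hnb : ¬ BddAbove (Set.univ : Set ℕ) := by
        rintro ⟨b, hb⟩
        have := hb (Set.mem_univ (b+1))
        omega
      rw [csSup_of_not_bddAbove hnb, csSup_empty]
      rfl
    rw [hrank d, hrank (G.K - d)]
    have hdeg : deg d = 0 := by simp [BN.deg]
    have hgen : genus G (fun _ => 0) = 1 := by
      simp [genus, MultiGraph.edgeCount, Fintype.card_eq_zero]
    rw [hdeg, hgen]
    ring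
  · obtain ⟨ρ₀, hρ₀⟩ := exists_inj (V := V)
    rw [rank_eq_sInf G hc d, rank_eq_sInf G hc (G.K - d)]
    set c : ℤ := deg d - deg (nu G ρ₀) with hc0
    have hd1 : sInf (Tset G d) ∈ Tset G d := Nat.sInf_mem (Tset_nonempty G d)
    have hd2 : sInf (Tset G (G.K - d)) ∈ Tset G (G.K - d) :=
      Nat.sInf_mem (Tset_nonempty G (G.K - d))
    obtain ⟨t', ht'T, ht'⟩ := Tset_shift G hl d hd1 hρ₀
    obtain ⟨t, htT, ht⟩ := Tset_shift G hl (G.K - d) hd2 hρ₀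
    have hKK : G.K - (G.K - d) = d := by
      funext v; simp only [Pi.sub_apply]; ring
    rw [hKK] at htT
    have l1 : sInf (Tset G (G.K - d)) ≤ t' := Nat.sInf_le ht'T
    have l2 : sInf (Tset G d) ≤ t := Nat.sInf_le htT
    have hdegKd : deg (G.K - d) = 2 * deg (nu G ρ₀) - deg d := by
      rw [deg_sub, deg_K G hl hρ₀]
    have hg := genus_eq G hl hρ₀
    rw [hdegKd] at ht
    have hgoal : ((sInf (Tset G d) : ℕ) : ℤ) - ((sInf (Tset G (G.K - d)) : ℕ) : ℤ) = c := by
      omega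
    rw [hg]
    omega

end RRproof

/-- Riemann–Roch for graphs (Baker–Norine). -/
theorem statement_16 {V : Type} [Fintype V] [DecidableEq V]
    (G : MultiGraph V) (hl : G.Loopless) (hc : G.Connected) (d : V → ℤ) :
    G.rank d - G.rank (G.K - d) = deg d - genus G (fun _ => 0) + 1 :=
  riemann_roch_aux G hl hc d

end BN
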